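/- arXiv:2601.04616 — 3 statements merged into one kernel-verified Lean document; each statement's English description precedes it below -/
import Mathlib

section
/- Let ι be a finite index type with decidable equality and E a real vector space. Let w : (ι → E) → (ι → ℝ) be permutation equivariant. Define u : (ι → E) → (ι → ℝ) by u(x)(j) = Σ_{T ⊆ univ \ {j}} w(mask(x, T ∪ {j}))(j), where the sum ranges over all subsets T of the complement of {j} in ι. Then u is permutation equivariant. -/
/-- The masked feature map: `mask x A i = x i` if `i ∈ A`, and `0` otherwise. -/
def mask {ι E : Type*} [DecidableEq ι] [Zero E] (x : ι → E) (A : Finset ι) : ι → E :=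
  fun i => if i ∈ A then x i else 0

/-- Permutation equivariance of a utility function `w : (ι → E) → (ι → ℝ)`. -/
def PermEquivariant {ι E : Type*} (w : (ι → E) → ι → ℝ) : Prop :=
  ∀ (π : Equiv.Perm ι) (x : ι → E) (j : ι), w (x ∘ π) j = w x (π j)

/-- if `w` is permutation equivariant, then the utility function
`u x j = ∑_{T ⊆ univ \ {j}} w (mask x (T ∪ {j})) j` is permutation equivariant. -/
theorem sum_masked_permEquivariant {ι : Type*} [Fintype ι] [DecidableEq ι]
    {E : Type*} [AddCommGroup E] [Module ℝ E]
    (w : (ι → E) → ι → ℝ) (hw : PermEquivariant w) :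
    PermEquivariant (fun (x : ι → E) (j : ι) =>
      ∑ T ∈ ((Finset.univ : Finset ι).erase j).powerset, w (mask x (insert j T)) j) := by
  intro π x j
  simp only
  refine Finset.sum_nbij' (fun T => T.map π.toEmbedding)
    (fun T => T.map π.symm.toEmbedding) ?_ ?_ ?_ ?_ ?_
  · intro T hT
    simp only [Finset.mem_powerset] at hT ⊢
    intro i hi
    simp only [Finset.mem_map, Equiv.coe_toEmbedding] at hi
    obtain ⟨a, ha, rfl⟩ := hi
    have := hT ha
    simp only [Finset.mem_erase] at this ⊢
    exact ⟨fun h => this.1 (π.injective h), Finset.mem_univ _⟩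
  · intro T hT
    simp only [Finset.mem_powerset] at hT ⊢
    intro i hi
    simp only [Finset.mem_map, Equiv.coe_toEmbedding] at hi
    obtain ⟨a, ha, rfl⟩ := hi
    have := hT ha
    simp only [Finset.mem_erase] at this ⊢
    refine ⟨fun h => this.1 ?_, Finset.mem_univ _⟩
    exact ((Equiv.symm_apply_eq π).mp h)
  · intro T _
    ext i; simp
  · intro T _
    ext i; simp
  · intro T _
    have key : mask (x ∘ π) (insert j T) =
        (mask x (insert (π j) (T.map π.toEmbedding))) ∘ π := by
      funext i
      simp only [mask, Function.comp_apply, Finset.mem_insert, Finset.mem_map,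
        Equiv.coe_toEmbedding]
      congr 1
      simp only [eq_iff_iff]
      constructor
      · rintro (rfl | h)
        · exact Or.inl rfl
        · exact Or.inr ⟨i, h, rfl⟩
      · rintro (h | ⟨a, ha, hai⟩)
        · exact Or.inl (π.injective h)
        · exact Or.inr (π.injective hai ▸ ha)
    rw [key, hw π]
end

section
/- Let ι be a type with decidable equality and let u : ι → Finset ι → ℝ assign to each alternative j and each offered set S the utility u(j)(S). For each j and each finite T with j ∉ T define v_j(T) = Σ_{R ⊆ T} (-1)^(|T| - |R|) · u(j)(R ∪ {j}), and for distinct j, k ∉ T define the relative context effect α_{jk}(T) = (v_j(T) + v_j(T ∪ {k})) − (v_k(T) + v_k(T ∪ {j})). Then α_{jk}(T) = Σ_{R ⊆ T} (-1)^(|T| - |R|) · (u(j)(R ∪ {j, k}) − u(k)(R ∪ {j, k})), i.e., the relative context effect is a signed sum of utility differences evaluated only on sets containing both j and k. -/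
/-- Featureless context-effect coefficient
`v_j(T) = ∑_{R ⊆ T} (-1)^(|T|-|R|) u(j)(R ∪ {j})`. -/
noncomputable def vCoef {ι : Type*} [DecidableEq ι]
    (u : ι → Finset ι → ℝ) (j : ι) (T : Finset ι) : ℝ :=
  ∑ R ∈ T.powerset, (-1 : ℝ) ^ (T.card - R.card) * u j (insert j R)

/-- Relative context effect
`α_{jk}(T) = (v_j(T) + v_j(T ∪ {k})) − (v_k(T) + v_k(T ∪ {j}))`. -/
noncomputable def alpha {ι : Type*} [DecidableEq ι]
    (u : ι → Finset ι → ℝ) (j k : ι) (T : Finset ι) : ℝ :=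
  (vCoef u j T + vCoef u j (insert k T)) - (vCoef u k T + vCoef u k (insert j T))

lemma vCoef_add_insert {ι : Type*} [DecidableEq ι]
    (u : ι → Finset ι → ℝ) (j k : ι) (T : Finset ι) (hk : k ∉ T) :
    vCoef u j T + vCoef u j (insert k T) =
      ∑ R ∈ T.powerset, (-1 : ℝ) ^ (T.card - R.card) * u j (insert j (insert k R)) := by
  unfold vCoef
  rw [Finset.sum_powerset_insert hk]
  have h1 : ∑ R ∈ T.powerset, (-1 : ℝ) ^ ((insert k T).card - R.card) * u j (insert j R)
      = -∑ R ∈ T.powerset, (-1 : ℝ) ^ (T.card - R.card) * u j (insert j R) := by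
    rw [← Finset.sum_neg_distrib]
    refine Finset.sum_congr rfl fun R hR => ?_
    have hle : R.card ≤ T.card := Finset.card_le_card (Finset.mem_powerset.mp hR)
    rw [Finset.card_insert_of_notMem hk, Nat.succ_sub hle, pow_succ]
    ring
  have h2 : ∀ R ∈ T.powerset, (-1 : ℝ) ^ ((insert k T).card - (insert k R).card) *
      u j (insert j (insert k R)) = (-1 : ℝ) ^ (T.card - R.card) * u j (insert j (insert k R)) := by
    intro R hR
    have hkR : k ∉ R := fun h => hk (Finset.mem_powerset.mp hR h)
    rw [Finset.card_insert_of_notMem hk, Finset.card_insert_of_notMem hkR,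
      Nat.succ_sub_succ]
  rw [h1, Finset.sum_congr rfl h2]
  ring

/-- the relative context effect is a signed sum of utility
differences evaluated only on sets containing both `j` and `k`:
`α_{jk}(T) = ∑_{R ⊆ T} (-1)^(|T|-|R|) (u(j)(R ∪ {j,k}) − u(k)(R ∪ {j,k}))`. -/
theorem alpha_eq_signed_sum_of_differences {ι : Type*} [DecidableEq ι]
    (u : ι → Finset ι → ℝ) (j k : ι) (hjk : j ≠ k)
    (T : Finset ι) (hj : j ∉ T) (hk : k ∉ T) :
    alpha u j k T =
      ∑ R ∈ T.powerset, (-1 : ℝ) ^ (T.card - R.card) *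
        (u j (insert j (insert k R)) - u k (insert j (insert k R))) := by
  unfold alpha
  rw [vCoef_add_insert u j k T hk, vCoef_add_insert u k j T hj, ← Finset.sum_sub_distrib]
  refine Finset.sum_congr rfl fun R hR => ?_
  rw [Finset.insert_comm]
  ring
end

section
/- Let ι be a type with decidable equality and let u, u' : ι → Finset ι → ℝ be two utility functions such that there exists c : Finset ι → ℝ with u'(j)(S) = u(j)(S) + c(S) for every finite set S and every j ∈ S (a set-dependent translation, under which the induced softmax choice probabilities coincide). For each utility function define v_j(T) = Σ_{R ⊆ T} (-1)^(|T| - |R|) · u(j)(R ∪ {j}) (respectively with u'), and the relative context effect α_{jk}(T) = (v_j(T) + v_j(T ∪ {k})) − (v_k(T) + v_k(T ∪ {j})) for distinct j, k ∉ T. Then the relative context effects agree: α'_{jk}(T) = α_{jk}(T) for all finite T and all distinct j, k ∉ T. -/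
/-- Alternating sum of `f` over subsets of `T`. -/
noncomputable def altSum {ι : Type*} [DecidableEq ι]
    (f : Finset ι → ℝ) (T : Finset ι) : ℝ :=
  ∑ R ∈ T.powerset, (-1 : ℝ) ^ (T.card - R.card) * f R

lemma altSum_insert {ι : Type*} [DecidableEq ι]
    (f : Finset ι → ℝ) (k : ι) (T : Finset ι) (hk : k ∉ T) :
    altSum f (insert k T) = -(altSum f T) + altSum (fun R => f (insert k R)) T := by
  unfold altSum
  rw [Finset.sum_powerset_insert hk, Finset.card_insert_of_notMem hk,
    ← Finset.sum_neg_distrib]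
  congr 1
  · apply Finset.sum_congr rfl
    intro R hR
    have hle : R.card ≤ T.card :=
      Finset.card_le_card (Finset.mem_powerset.mp hR)
    have : T.card + 1 - R.card = (T.card - R.card) + 1 := by omega
    rw [this, pow_succ]
    ring
  · apply Finset.sum_congr rfl
    intro R hR
    have hkR : k ∉ R := fun hmem => hk (Finset.mem_powerset.mp hR hmem)
    rw [Finset.card_insert_of_notMem hkR]
    have : T.card + 1 - (R.card + 1) = T.card - R.card := by omega
    rw [this]

lemma vCoef_translate {ι : Type*} [DecidableEq ι]
    (u u' : ι → Finset ι → ℝ) (c : Finset ι → ℝ)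
    (hc : ∀ (S : Finset ι) (j : ι), j ∈ S → u' j S = u j S + c S)
    (j : ι) (T : Finset ι) :
    vCoef u' j T = vCoef u j T + altSum (fun R => c (insert j R)) T := by
  unfold vCoef altSum
  rw [← Finset.sum_add_distrib]
  apply Finset.sum_congr rfl
  intro R _
  rw [hc (insert j R) j (Finset.mem_insert_self j R)]
  ring

/-- relative context effects are invariant under set-dependent
translations of the utilities: if `u'(j)(S) = u(j)(S) + c(S)` for all `S` and all
`j ∈ S`, then `α'_{jk}(T) = α_{jk}(T)` for all finite `T` and distinct `j, k ∉ T`. -/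
theorem alpha_invariant_under_translation {ι : Type*} [DecidableEq ι]
    (u u' : ι → Finset ι → ℝ)
    (h : ∃ c : Finset ι → ℝ, ∀ (S : Finset ι) (j : ι), j ∈ S → u' j S = u j S + c S) :
    ∀ (T : Finset ι) (j k : ι), j ≠ k → j ∉ T → k ∉ T →
      alpha u' j k T = alpha u j k T := by
  obtain ⟨c, hc⟩ := h
  intro T j k hjk hj hk
  unfold alpha
  rw [vCoef_translate u u' c hc, vCoef_translate u u' c hc,
    vCoef_translate u u' c hc, vCoef_translate u u' c hc,
    altSum_insert _ k T hk, altSum_insert _ j T hj]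
  have hsym : altSum (fun R => c (insert j (insert k R))) T
      = altSum (fun R => c (insert k (insert j R))) T := by
    simp only [Finset.insert_comm]
  rw [hsym]
  ring
end
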